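/- For every integer β ≥ 1, there exists a block-aware caching instance with blocks of size at most β, unit block costs (c_B = 1 for all B), and a specified initial cache C_0, such that the minimum eviction cost over all cache schedules for the instance is at least β times the minimum fetching cost over all cache schedules, and the minimum fetching cost is strictly positive. -/

import Mathlib

open scoped Classical

/-- A block-aware caching instance: `n` pages `Fin n`, `m` blocks `Fin m`,
blocks of size at most `β`, block costs `c`, cache size `k`, request
sequence `req` over times `1,…,T`. -/
structure BlockInstance where
  n : ℕ
  m : ℕ
  β : ℕ
  k : ℕ
  T : ℕ
  blk : Fin n → Fin m
  blk_surj : Function.Surjective blk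
  block_size : ∀ b : Fin m, (Finset.univ.filter fun p => blk p = b).card ≤ β
  c : Fin m → ℝ
  c_pos : ∀ b, 0 < c b
  one_le_beta : 1 ≤ β
  beta_le_k : β ≤ k
  k_le_n : k ≤ n
  req : ℕ → Fin n

namespace BlockInstance

variable (I : BlockInstance)

/-- Page `p` is missing at time `τ` according to the set of flushes `S`:
there is a flush `(B(p), t)` with `r(p,τ) < t ≤ τ`, i.e. `t ≤ τ` and
`p` is not requested at any time in `[t, τ] ∩ [1, ∞)`. -/
def Missing (S : Set (Fin I.m × ℕ)) (τ : ℕ) (p : Fin I.n) : Prop :=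
  ∃ t, t ≤ τ ∧ (I.blk p, t) ∈ S ∧ ∀ u, t ≤ u → u ≤ τ → 1 ≤ u → I.req u ≠ p

/-- `f_τ(S) = min (n - k) #{missing pages at τ}`. -/
noncomputable def f (τ : ℕ) (S : Set (Fin I.m × ℕ)) : ℕ :=
  min (I.n - I.k) (Finset.univ.filter fun p => I.Missing S τ p).card

/-- `S` is a set of flushes: all its times lie in `{0,…,T}`. -/
def FlushSet (S : Set (Fin I.m × ℕ)) : Prop := ∀ x ∈ S, x.2 ≤ I.T

end BlockInstance

namespace BlockInstance

variable (I : BlockInstance)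

/-- A cache schedule with initial cache `C₀`: `C 0 = C₀`, each cache state
has at most `k` pages, and the request at each time `t ∈ {1,…,T}` is served. -/
def Schedule (C₀ : Finset (Fin I.n)) (C : ℕ → Finset (Fin I.n)) : Prop :=
  C 0 = C₀ ∧ ∀ t, 1 ≤ t → t ≤ I.T → I.req t ∈ C t ∧ (C t).card ≤ I.k

/-- Fetching cost of a sequence of cache states: at each time, pay `c_B` for
every block `B` meeting `C t \ C (t-1)`. -/
noncomputable def fetchCost (C : ℕ → Finset (Fin I.n)) : ℝ :=
  ∑ t ∈ Finset.Icc 1 I.T,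
    ∑ b ∈ Finset.univ.filter
      (fun b : Fin I.m => ∃ p, I.blk p = b ∧ p ∈ C t ∧ p ∉ C (t - 1)), I.c b

/-- Eviction cost of a sequence of cache states: at each time, pay `c_B` for
every block `B` meeting `C (t-1) \ C t`. -/
noncomputable def evictCost (C : ℕ → Finset (Fin I.n)) : ℝ :=
  ∑ t ∈ Finset.Icc 1 I.T,
    ∑ b ∈ Finset.univ.filter
      (fun b : Fin I.m => ∃ p, I.blk p = b ∧ p ∈ C (t - 1) ∧ p ∉ C t), I.c b

end BlockInstance

namespace EB

variable (β : ℕ) (hβ : 1 ≤ β)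

def inst : BlockInstance where
  n := 2*β
  m := β+1
  β := β
  k := β
  T := β^3
  blk := fun p => ⟨min p.val β, by omega⟩
  blk_surj := by
    intro b
    rcases lt_or_ge b.val β with h | h
    · exact ⟨⟨b.val, by omega⟩, by ext; simp; omega⟩
    · have hb : b.val = β := by omega
      exact ⟨⟨β, by omega⟩, by ext; simp [hb]⟩
  block_size := by
    intro b
    rcases lt_or_ge b.val β with h | h
    · have hsub : (Finset.univ.filter fun p : Fin (2*β) => (⟨min p.val β, by omega⟩ : Fin (β+1)) = b)
          ⊆ {(⟨b.val, by omega⟩ : Fin (2*β))} := by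
        intro p hp
        simp only [Finset.mem_filter, Finset.mem_univ, true_and] at hp
        have := congrArg Fin.val hp
        simp only [Finset.mem_singleton]
        ext
        simp at this ⊢
        omega
      calc _ ≤ ({(⟨b.val, by omega⟩ : Fin (2*β))} : Finset _).card := Finset.card_le_card hsub
        _ ≤ β := by simp; omega
    · have : (Finset.univ.filter fun p : Fin (2*β) => (⟨min p.val β, by omega⟩ : Fin (β+1)) = b).card
          ≤ (Finset.univ : Finset (Fin β)).card := by
        apply Finset.card_le_card_of_injOn (fun p => (⟨p.val - β, by omega⟩ : Fin β))
          (fun _ _ => Finset.mem_univ _)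
        intro p hp q hq hpq
        simp only [Finset.coe_filter, Set.mem_setOf_eq, Finset.mem_univ, true_and] at hp hq
        have hp' : β ≤ p.val := by
          by_contra h'
          have := congrArg Fin.val hp
          simp at this; omega
        have hq' : β ≤ q.val := by
          by_contra h'
          have := congrArg Fin.val hq
          simp at this; omega
        have := congrArg Fin.val hpq
        simp at this
        ext; omega
      simpa using this
  c := fun _ => 1
  c_pos := fun _ => one_pos
  one_le_beta := hβ
  beta_le_k := le_refl _
  k_le_n := by omega
  req := fun t => ⟨β + (t-1) % β, by have := Nat.mod_lt (t-1) (show 0 < β by omega); omega⟩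

attribute [reducible] inst


end EB

namespace EB

variable (β : ℕ) (hβ : 1 ≤ β)

def C0 : Finset (Fin (2*β)) := Finset.univ.filter (fun p => p.val < β)

def Bset : Finset (Fin (2*β)) := Finset.univ.filter (fun p => β ≤ p.val)

lemma card_C0 : (C0 β).card = β := by
  have h : ∀ x ∈ Finset.range β, x < 2*β := by intro x hx; simp at hx; omega
  have : C0 β = (Finset.range β).attachFin h := by
    ext a; simp [C0, Finset.mem_attachFin]
  rw [this, Finset.card_attachFin, Finset.card_range]

lemma card_Bset : (Bset β).card = β := by
  have h : ∀ x ∈ Finset.Ico β (2*β), x < 2*β := by intro x hx; simp at hx; omega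
  have : Bset β = (Finset.Ico β (2*β)).attachFin h := by
    ext a; simp [Bset, Finset.mem_attachFin]
  rw [this, Finset.card_attachFin, Nat.card_Ico]
  omega

def Cgood : ℕ → Finset (Fin (2*β)) := fun t => if t = 0 then C0 β else Bset β

lemma T_def : (inst β hβ).T = β^3 := rfl

lemma hT1 : 1 ≤ (inst β hβ).T := by rw [T_def]; exact Nat.one_le_pow _ _ (by omega)

lemma req_val (t : ℕ) : ((inst β hβ).req t).val = β + (t-1) % β := rfl

lemma sched_good : (inst β hβ).Schedule (C0 β) (Cgood β) := by
  constructor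
  · simp [Cgood]
  · intro t ht _
    constructor
    · have : Cgood β t = Bset β := by simp [Cgood]; omega
      rw [this]
      show (inst β hβ).req t ∈ Bset β
      simp only [Bset, Finset.mem_filter, Finset.mem_univ, true_and, req_val]
      omega
    · have : Cgood β t = Bset β := by simp [Cgood]; omega
      rw [this, card_Bset]

lemma fetch_good : (inst β hβ).fetchCost (Cgood β) = 1 := by
  unfold BlockInstance.fetchCost
  rw [Finset.sum_eq_single_of_mem 1]
  · have hfil : (Finset.univ.filter
        (fun b : Fin ((inst β hβ).m) => ∃ p, (inst β hβ).blk p = b ∧ p ∈ Cgood β 1 ∧ p ∉ Cgood β (1-1)))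
        = {(⟨β, by omega⟩ : Fin (β+1))} := by
      ext b
      simp only [Finset.mem_filter, Finset.mem_univ, true_and, Finset.mem_singleton]
      constructor
      · rintro ⟨p, hb, hp1, hp0⟩
        have h1 : p ∈ Bset β := by simpa [Cgood] using hp1
        have h0 : p ∉ C0 β := by simpa [Cgood] using hp0
        simp only [Bset, Finset.mem_filter, Finset.mem_univ, true_and] at h1
        rw [← hb]
        ext
        show min p.val β = β
        omega
      · rintro rfl
        refine ⟨⟨β, show β < 2*β by omega⟩, ?_, ?_, ?_⟩
        · ext; show min β β = β; omega
        · simp [Cgood, Bset]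
        · simp [Cgood, C0]
    rw [hfil]
    simp [inst]
  · simp only [Finset.mem_Icc]
    exact ⟨le_refl _, hT1 β hβ⟩
  · intro t ht ht1
    simp only [Finset.mem_Icc] at ht
    have h1 : Cgood β t = Bset β := by simp [Cgood]; omega
    have h2 : Cgood β (t-1) = Bset β := by simp [Cgood]; omega
    have : (Finset.univ.filter
        (fun b : Fin ((inst β hβ).m) => ∃ p, (inst β hβ).blk p = b ∧ p ∈ Cgood β t ∧ p ∉ Cgood β (t-1)))
        = ∅ := by
      rw [Finset.eq_empty_iff_forall_notMem]
      intro b hb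
      simp only [Finset.mem_filter, Finset.mem_univ, true_and] at hb
      obtain ⟨p, _, hp1, hp0⟩ := hb
      rw [h1] at hp1; rw [h2] at hp0
      exact hp0 hp1
    rw [this, Finset.sum_empty]

end EB

namespace EB

variable (β : ℕ) (C : ℕ → Finset (Fin (2*β)))

def ev (t : ℕ) : ℕ := ((C (t-1)).filter (fun p => p.val < β ∧ p ∉ C t)).card
def rB (t : ℕ) : ℕ := ((C (t-1)).filter (fun p => ¬ p.val < β ∧ p ∉ C t)).card
def aB (t : ℕ) : ℕ := ((C t).filter (fun p => ¬ p.val < β ∧ p ∉ C (t-1))).card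
def sing (t : ℕ) : ℕ := ((C t).filter (fun p => p.val < β)).card
def big (t : ℕ) : ℕ := ((C t).filter (fun p => ¬ p.val < β)).card
def Es : ℕ := ∑ t ∈ Finset.Ioc 0 (β^3), ev β C t
def NN : ℕ := ((Finset.Ioc 0 (β^3)).filter (fun t => 0 < rB β C t)).card

lemma sing_step (t : ℕ) : sing β C t ≤ sing β C (t+1) + ev β C (t+1) := by
  have hsub : (C t).filter (fun p => p.val < β) ⊆
      ((C (t+1)).filter (fun p => p.val < β)) ∪
      ((C t).filter (fun p => p.val < β ∧ p ∉ C (t+1))) := by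
    intro p hp
    simp only [Finset.mem_filter, Finset.mem_union] at *
    by_cases h : p ∈ C (t+1)
    · exact Or.inl ⟨h, hp.2⟩
    · exact Or.inr ⟨hp.1, hp.2, h⟩
  calc sing β C t ≤ _ := Finset.card_le_card hsub
    _ ≤ _ := Finset.card_union_le _ _

lemma sing_lb (h0 : C 0 = C0 β) :
    ∀ t, β ≤ sing β C t + ∑ u ∈ Finset.Ioc 0 t, ev β C u := by
  intro t
  induction t with
  | zero =>
    have h : (C 0).filter (fun p => p.val < β) = C0 β := by
      rw [h0]; ext p; simp [C0]
    simp [sing, h, card_C0]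
  | succ t ih =>
    rw [Finset.sum_Ioc_succ_top (Nat.zero_le _)]
    have := sing_step β C t
    omega

lemma sing_big (t : ℕ) : sing β C t + big β C t = (C t).card :=
  Finset.card_filter_add_card_filter_not _

lemma big_zero (h0 : C 0 = C0 β) : big β C 0 = 0 := by
  unfold big
  rw [h0, Finset.card_eq_zero, Finset.eq_empty_iff_forall_notMem]
  intro p hp
  simp [C0] at hp
  omega


lemma big_le_Es (hβ : 1 ≤ β) (hC : (inst β hβ).Schedule (C0 β) C) :
    ∀ t ≤ β^3, big β C t ≤ Es β C := by
  intro t ht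
  match t with
  | 0 => simp [big_zero β C hC.1]
  | (t+1) =>
    have h1 : sing β C (t+1) + big β C (t+1) = (C (t+1)).card := sing_big β C (t+1)
    have h2 : (C (t+1)).card ≤ β := (hC.2 (t+1) (by omega) ht).2
    have h3 := sing_lb β C hC.1 (t+1)
    have h4 : ∑ u ∈ Finset.Ioc 0 (t+1), ev β C u ≤ Es β C :=
      Finset.sum_le_sum_of_subset (Finset.Ioc_subset_Ioc_right ht)
    omega

lemma balance (t : ℕ) :
    big β C t + aB β C (t+1) = big β C (t+1) + rB β C (t+1) := by
  set X := (C t).filter (fun p => ¬ p.val < β) with hX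
  set Y := (C (t+1)).filter (fun p => ¬ p.val < β) with hY
  have hYX : Y \ X = (C (t+1)).filter (fun p => ¬ p.val < β ∧ p ∉ C t) := by
    ext p
    simp only [hX, hY, Finset.mem_sdiff, Finset.mem_filter]
    tauto
  have hXY : X \ Y = (C t).filter (fun p => ¬ p.val < β ∧ p ∉ C (t+1)) := by
    ext p
    simp only [hX, hY, Finset.mem_sdiff, Finset.mem_filter]
    tauto
  have h1 : (Y \ X).card + X.card = (Y ∪ X).card := Finset.card_sdiff_add_card Y X
  have h2 : (X \ Y).card + Y.card = (X ∪ Y).card := Finset.card_sdiff_add_card X Y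
  have h3 : (Y ∪ X) = (X ∪ Y) := Finset.union_comm _ _
  have ha : aB β C (t+1) = (Y \ X).card := by rw [hYX]; rfl
  have hr : rB β C (t+1) = (X \ Y).card := by rw [hXY]; rfl
  have hbt : big β C t = X.card := rfl
  have hbt1 : big β C (t+1) = Y.card := rfl
  rw [h3] at h1
  omega

lemma telescope (h0 : C 0 = C0 β) :
    ∀ t, (∑ u ∈ Finset.Ioc 0 t, aB β C u) = big β C t + ∑ u ∈ Finset.Ioc 0 t, rB β C u := by
  intro t
  induction t with
  | zero => simp [big_zero β C h0]
  | succ t ih =>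
    rw [Finset.sum_Ioc_succ_top (Nat.zero_le _), Finset.sum_Ioc_succ_top (Nat.zero_le _), ih]
    have := balance β C t
    omega

lemma firstEntry (p : Fin (2*β)) :
    ∀ b a, a < b → p ∉ C a → p ∈ C b →
      ∃ u, a < u ∧ u ≤ b ∧ p ∈ C u ∧ p ∉ C (u-1) := by
  intro b
  induction b with
  | zero => intro a h; omega
  | succ b ih =>
    intro a hab hpa hpb
    by_cases hb : p ∈ C b
    · rcases Nat.lt_or_ge a b with h | h
      · obtain ⟨u, h1, h2, h3, h4⟩ := ih a h hpa hb
        exact ⟨u, h1, Nat.le_succ_of_le h2, h3, h4⟩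
      · have : a = b := by omega
        subst this
        exact absurd hb hpa
    · exact ⟨b+1, by omega, le_refl _, hpb, by simpa using hb⟩



lemma cycle (hβ : 1 ≤ β) (hC : (inst β hβ).Schedule (C0 β) C) (j : ℕ) (hj : j < β^2) :
    β ≤ big β C (j*β) + ∑ u ∈ Finset.Ioc (j*β) (j*β + β), aB β C u := by
  classical
  set D := Finset.univ.filter (fun p : Fin (2*β) => ¬ p.val < β ∧ p ∉ C (j*β)) with hD
  -- big (j*β) + D.card = β
  have hsplit : big β C (j*β) + D.card = β := by
    have h1 : ((Finset.univ.filter (fun p : Fin (2*β) => ¬ p.val < β)).filter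
        (fun p => p ∈ C (j*β))).card +
        ((Finset.univ.filter (fun p : Fin (2*β) => ¬ p.val < β)).filter
        (fun p => ¬ p ∈ C (j*β))).card
        = (Finset.univ.filter (fun p : Fin (2*β) => ¬ p.val < β)).card :=
      Finset.card_filter_add_card_filter_not _
    have h2 : (Finset.univ.filter (fun p : Fin (2*β) => ¬ p.val < β)).card = β := by
      have he : (Finset.univ.filter (fun p : Fin (2*β) => ¬ p.val < β)) = Bset β := by
        ext p; simp [Bset]
      rw [he, card_Bset]
    have h3 : ((Finset.univ.filter (fun p : Fin (2*β) => ¬ p.val < β)).filter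
        (fun p => p ∈ C (j*β))) = ((C (j*β)).filter (fun p => ¬ p.val < β)) := by
      ext p; simp only [Finset.mem_filter, Finset.mem_univ, true_and]; tauto
    have h4 : ((Finset.univ.filter (fun p : Fin (2*β) => ¬ p.val < β)).filter
        (fun p => ¬ p ∈ C (j*β))) = D := by
      ext p; simp only [hD, Finset.mem_filter, Finset.mem_univ, true_and]
    rw [h3, h4, h2] at h1
    exact h1
  have hsub : D ⊆ (Finset.Ioc (j*β) (j*β + β)).biUnion
      (fun u => (C u).filter (fun p => ¬ p.val < β ∧ p ∉ C (u-1))) := by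
    intro p hp
    simp only [hD, Finset.mem_filter, Finset.mem_univ, true_and] at hp
    obtain ⟨hpge, hpnot⟩ := hp
    set i := p.val - β with hi
    have hilt : i < β := by have := p.isLt; omega
    have htle : j*β + i + 1 ≤ β^3 := by
      have h5 : (j+1)*β ≤ β^2*β := Nat.mul_le_mul_right β hj
      have h6 : β^2*β = β^3 := by ring
      have h7 : j*β + i + 1 ≤ (j+1)*β := by
        rw [Nat.succ_mul]; omega
      omega
    have hreq : (inst β hβ).req (j*β + i + 1) = p := by
      ext
      rw [req_val]
      have h8 : (j*β + i + 1) - 1 = i + j*β := by omega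
      rw [h8, Nat.add_mul_mod_self_right, Nat.mod_eq_of_lt hilt]
      omega
    have hpC : p ∈ C (j*β + i + 1) := by
      have := (hC.2 (j*β + i + 1) (by omega) htle).1
      rwa [hreq] at this
    obtain ⟨u, hu1, hu2, hu3, hu4⟩ := firstEntry β C p (j*β + i + 1) (j*β) (by omega) hpnot hpC
    simp only [Finset.mem_biUnion, Finset.mem_Ioc, Finset.mem_filter]
    exact ⟨u, ⟨hu1, by omega⟩, hu3, hpge, hu4⟩
  have hcard : D.card ≤ ∑ u ∈ Finset.Ioc (j*β) (j*β + β), aB β C u :=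
    le_trans (Finset.card_le_card hsub) (Finset.card_biUnion_le)
  omega

lemma cycles (hβ : 1 ≤ β) (hC : (inst β hβ).Schedule (C0 β) C) :
    ∀ J, J ≤ β^2 → J*β ≤ J * Es β C + ∑ u ∈ Finset.Ioc 0 (J*β), aB β C u := by
  intro J
  induction J with
  | zero => simp
  | succ J ih =>
    intro hJ
    have hJ' : J < β^2 := by omega
    have ihh := ih (by omega)
    have hc := cycle β C hβ hC J hJ'
    have hb : big β C (J*β) ≤ Es β C := by
      apply big_le_Es β C hβ hC
      calc J*β ≤ β^2*β := Nat.mul_le_mul_right β (le_of_lt hJ')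
        _ = β^3 := by ring
    have hsplit : (∑ u ∈ Finset.Ioc 0 (J*β), aB β C u) +
        (∑ u ∈ Finset.Ioc (J*β) (J*β + β), aB β C u) =
        ∑ u ∈ Finset.Ioc 0 ((J+1)*β), aB β C u := by
      rw [Nat.succ_mul]
      exact Finset.sum_Ioc_consecutive _ (Nat.zero_le _) (by omega)
    have : β ≤ Es β C + ∑ u ∈ Finset.Ioc (J*β) (J*β + β), aB β C u := by omega
    calc (J+1)*β = J*β + β := by rw [Nat.succ_mul]
      _ ≤ (J * Es β C + ∑ u ∈ Finset.Ioc 0 (J*β), aB β C u) +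
          (Es β C + ∑ u ∈ Finset.Ioc (J*β) (J*β + β), aB β C u) := Nat.add_le_add ihh this
      _ = (J+1) * Es β C + ((∑ u ∈ Finset.Ioc 0 (J*β), aB β C u) +
          (∑ u ∈ Finset.Ioc (J*β) (J*β + β), aB β C u)) := by ring
      _ = (J+1) * Es β C + ∑ u ∈ Finset.Ioc 0 ((J+1)*β), aB β C u := by rw [hsplit]

lemma rB_le (hβ : 1 ≤ β) (hC : (inst β hβ).Schedule (C0 β) C) (t : ℕ) (ht : t ≤ β^3) :
    rB β C t ≤ Es β C := by
  have h1 : rB β C t ≤ big β C (t-1) := by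
    apply Finset.card_le_card
    intro p hp
    simp only [Finset.mem_filter] at *
    tauto
  have h2 : big β C (t-1) ≤ Es β C := big_le_Es β C hβ hC (t-1) (by omega)
  omega

lemma sumR_le (hβ : 1 ≤ β) (hC : (inst β hβ).Schedule (C0 β) C) :
    ∑ u ∈ Finset.Ioc 0 (β^3), rB β C u ≤ NN β C * Es β C := by
  have h1 : ∑ u ∈ (Finset.Ioc 0 (β^3)).filter (fun t => 0 < rB β C t), rB β C u =
      ∑ u ∈ Finset.Ioc 0 (β^3), rB β C u := by
    apply Finset.sum_subset (Finset.filter_subset _ _)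
    intro x hx hnx
    simp only [Finset.mem_filter, hx, true_and, not_lt, Nat.le_zero] at hnx
    exact hnx
  rw [← h1]
  calc _ ≤ ((Finset.Ioc 0 (β^3)).filter (fun t => 0 < rB β C t)).card • Es β C := by
        apply Finset.sum_le_card_nsmul
        intro t ht
        simp only [Finset.mem_filter, Finset.mem_Ioc] at ht
        exact rB_le β C hβ hC t ht.1.2
    _ = NN β C * Es β C := by rw [smul_eq_mul]; rfl

lemma one_le_Es (hβ : 1 ≤ β) (hC : (inst β hβ).Schedule (C0 β) C) : 1 ≤ Es β C := by
  have h1 : (inst β hβ).req 1 ∈ C 1 := (hC.2 1 le_rfl (hT1 β hβ)).1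
  have h2 : ¬ ((inst β hβ).req 1).val < β := by rw [req_val]; omega
  have h3 : 0 < big β C 1 :=
    Finset.card_pos.mpr ⟨(inst β hβ).req 1, Finset.mem_filter.mpr ⟨h1, h2⟩⟩
  have h4 : big β C 1 ≤ Es β C := big_le_Es β C hβ hC 1 (hT1 β hβ)
  omega


lemma blocks_lb (hβ : 1 ≤ β) (t : ℕ) :
    ev β C t + (if 0 < rB β C t then 1 else 0) ≤
    (Finset.univ.filter (fun b : Fin ((inst β hβ).m) =>
      ∃ p, (inst β hβ).blk p = b ∧ p ∈ C (t-1) ∧ p ∉ C t)).card := by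
  classical
  set E := (Finset.univ.filter (fun b : Fin ((inst β hβ).m) =>
      ∃ p, (inst β hβ).blk p = b ∧ p ∈ C (t-1) ∧ p ∉ C t)) with hE
  have hsplit : (E.filter (fun b => b.val < β)).card +
      (E.filter (fun b => ¬ b.val < β)).card = E.card :=
    Finset.card_filter_add_card_filter_not _
  have h1 : ev β C t ≤ (E.filter (fun b => b.val < β)).card := by
    apply Finset.card_le_card_of_injOn (fun p => (inst β hβ).blk p)
    · intro p hp
      simp only [Finset.mem_coe, Finset.mem_filter] at hp
      have hv : ((inst β hβ).blk p).val = p.val := by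
        show min p.val β = p.val
        omega
      refine Finset.mem_filter.mpr ⟨Finset.mem_filter.mpr
        ⟨Finset.mem_univ _, ⟨p, rfl, hp.1, hp.2.2⟩⟩, ?_⟩
      rw [hv]; exact hp.2.1
    · intro p hp q hq hpq
      simp only [Finset.mem_coe, Finset.coe_filter, Set.mem_setOf_eq, Finset.mem_filter] at hp hq
      have h := congrArg Fin.val hpq
      have hv1 : ((inst β hβ).blk p).val = min p.val β := rfl
      have hv2 : ((inst β hβ).blk q).val = min q.val β := rfl
      rw [hv1, hv2] at h
      have hp2 := hp.2.1
      have hq2 := hq.2.1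
      ext
      omega
  have h2 : (if 0 < rB β C t then 1 else 0) ≤ (E.filter (fun b => ¬ b.val < β)).card := by
    split
    · next h =>
      obtain ⟨p, hp⟩ := Finset.card_pos.mp h
      simp only [Finset.mem_filter] at hp
      have hv : ((inst β hβ).blk p).val = min p.val β := rfl
      have hmem : (inst β hβ).blk p ∈ E.filter (fun b => ¬ b.val < β) := by
        refine Finset.mem_filter.mpr ⟨Finset.mem_filter.mpr
          ⟨Finset.mem_univ _, ⟨p, rfl, hp.1, hp.2.2⟩⟩, ?_⟩
        rw [hv]
        have := hp.2.1
        omega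
      exact Finset.card_pos.mpr ⟨_, hmem⟩
    · exact Nat.zero_le _
  omega

lemma evict_ge (hβ : 1 ≤ β) :
    ((Es β C + NN β C : ℕ) : ℝ) ≤ (inst β hβ).evictCost C := by
  classical
  unfold BlockInstance.evictCost
  have hIcc : Finset.Icc 1 (inst β hβ).T = Finset.Ioc 0 (β^3) := by
    rw [T_def]
    exact Finset.Icc_add_one_left_eq_Ioc 0 _
  rw [hIcc]
  have hinner : ∀ t, (∑ b ∈ Finset.univ.filter (fun b : Fin ((inst β hβ).m) =>
      ∃ p, (inst β hβ).blk p = b ∧ p ∈ C (t-1) ∧ p ∉ C t), (inst β hβ).c b) =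
      (((Finset.univ.filter (fun b : Fin ((inst β hβ).m) =>
      ∃ p, (inst β hβ).blk p = b ∧ p ∈ C (t-1) ∧ p ∉ C t)).card : ℕ) : ℝ) := by
    intro t
    have hc : (inst β hβ).c = fun _ => (1:ℝ) := rfl
    rw [hc, Finset.sum_const, nsmul_eq_mul, mul_one]
  have hsum : (∑ t ∈ Finset.Ioc 0 (β^3), ∑ b ∈ Finset.univ.filter
      (fun b : Fin ((inst β hβ).m) =>
      ∃ p, (inst β hβ).blk p = b ∧ p ∈ C (t-1) ∧ p ∉ C t), (inst β hβ).c b) =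
      ((∑ t ∈ Finset.Ioc 0 (β^3), (Finset.univ.filter (fun b : Fin ((inst β hβ).m) =>
      ∃ p, (inst β hβ).blk p = b ∧ p ∈ C (t-1) ∧ p ∉ C t)).card : ℕ) : ℝ) := by
    rw [Nat.cast_sum]
    exact Finset.sum_congr rfl (fun t _ => hinner t)
  rw [hsum]
  apply Nat.cast_le.mpr
  have hNN : NN β C = ∑ t ∈ Finset.Ioc 0 (β^3), (if 0 < rB β C t then 1 else 0) := by
    unfold NN
    rw [Finset.card_filter]
  have hEs : Es β C = ∑ t ∈ Finset.Ioc 0 (β^3), ev β C t := rfl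
  rw [hEs, hNN, ← Finset.sum_add_distrib]
  exact Finset.sum_le_sum (fun t _ => blocks_lb β C hβ t)

lemma evict_lb (hβ : 1 ≤ β) (hC : (inst β hβ).Schedule (C0 β) C) :
    (β : ℝ) ≤ (inst β hβ).evictCost C := by
  have hmain : β ≤ Es β C + NN β C := by
    have k2 := telescope β C hC.1 (β^3)
    have k3 : big β C (β^3) ≤ Es β C := big_le_Es β C hβ hC (β^3) le_rfl
    have k4 := sumR_le β C hβ hC
    have k5 : 1 ≤ Es β C := one_le_Es β C hβ hC
    have key : β^3 ≤ β^2 * Es β C + (Es β C + NN β C * Es β C) := by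
      calc β^3 = β^2*β := by ring
        _ ≤ β^2 * Es β C + ∑ u ∈ Finset.Ioc 0 (β^2*β), aB β C u :=
            cycles β C hβ hC (β^2) le_rfl
        _ = β^2 * Es β C + ∑ u ∈ Finset.Ioc 0 (β^3), aB β C u := by
            rw [show β^2*β = β^3 by ring]
        _ = β^2 * Es β C + (big β C (β^3) + ∑ u ∈ Finset.Ioc 0 (β^3), rB β C u) := by
            rw [k2]
        _ ≤ β^2 * Es β C + (Es β C + NN β C * Es β C) :=
            Nat.add_le_add_left (Nat.add_le_add k3 k4) _
    by_contra hcon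
    push_neg at hcon
    have hA : Es β C + NN β C + 1 ≤ β := by omega
    have h6 : β^2*(Es β C + NN β C + 1) ≤ β^2*β := Nat.mul_le_mul_left _ hA
    have h8 : β^2*(Es β C) + (β^2*(NN β C) + β^2) ≤
        β^2*(Es β C) + (Es β C + NN β C * Es β C) := by
      calc β^2*(Es β C) + (β^2*(NN β C) + β^2) = β^2*(Es β C + NN β C + 1) := by ring
        _ ≤ β^2*β := h6
        _ = β^3 := by ring
        _ ≤ β^2 * Es β C + (Es β C + NN β C * Es β C) := key
    have h9 : β^2*(NN β C) + β^2 ≤ Es β C + NN β C * Es β C :=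
      Nat.le_of_add_le_add_left h8
    have hb2 : β ≤ β^2 := Nat.le_self_pow (by norm_num) β
    have hEs2 : Es β C < β^2 := lt_of_lt_of_le (by omega) hb2
    have h11 : Es β C + NN β C * Es β C < β^2 + NN β C * β^2 :=
      Nat.add_lt_add_of_lt_of_le hEs2 (Nat.mul_le_mul_left _ hEs2.le)
    have h12 : β^2 + NN β C * β^2 = β^2*(NN β C) + β^2 := by ring
    rw [h12] at h11
    exact absurd (lt_of_le_of_lt h9 h11) (lt_irrefl _)
  calc (β : ℝ) ≤ ((Es β C + NN β C : ℕ) : ℝ) := by exact_mod_cast hmain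
    _ ≤ _ := evict_ge β C hβ


lemma fetch_lb (hβ : 1 ≤ β) (hC : (inst β hβ).Schedule (C0 β) C) :
    (1:ℝ) ≤ (inst β hβ).fetchCost C := by
  classical
  unfold BlockInstance.fetchCost
  have hmem : (1:ℕ) ∈ Finset.Icc 1 (inst β hβ).T :=
    Finset.mem_Icc.mpr ⟨le_rfl, hT1 β hβ⟩
  have hterm : (1:ℝ) ≤ ∑ b ∈ Finset.univ.filter (fun b : Fin ((inst β hβ).m) =>
      ∃ p, (inst β hβ).blk p = b ∧ p ∈ C 1 ∧ p ∉ C (1-1)), (inst β hβ).c b := by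
    have hreq1 : (inst β hβ).req 1 ∈ C 1 := (hC.2 1 le_rfl (hT1 β hβ)).1
    have hreqv : ((inst β hβ).req 1).val = β := by rw [req_val]; simp
    have hnot : (inst β hβ).req 1 ∉ C (1-1) := by
      show (inst β hβ).req 1 ∉ C 0
      rw [hC.1]
      simp only [C0, Finset.mem_filter, Finset.mem_univ, true_and, hreqv]
      omega
    have hb : ((inst β hβ).blk ((inst β hβ).req 1)) ∈
        Finset.univ.filter (fun b : Fin ((inst β hβ).m) =>
        ∃ p, (inst β hβ).blk p = b ∧ p ∈ C 1 ∧ p ∉ C (1-1)) :=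
      Finset.mem_filter.mpr ⟨Finset.mem_univ _, ⟨_, rfl, hreq1, hnot⟩⟩
    have := Finset.single_le_sum (f := fun b => (inst β hβ).c b)
      (fun b _ => le_of_lt ((inst β hβ).c_pos b)) hb
    have hc1 : (inst β hβ).c ((inst β hβ).blk ((inst β hβ).req 1)) = 1 := rfl
    simp only [] at this
    exact this
  calc (1:ℝ) ≤ _ := hterm
    _ ≤ _ := Finset.single_le_sum (f := fun t => ∑ b ∈ Finset.univ.filter
        (fun b : Fin ((inst β hβ).m) =>
        ∃ p, (inst β hβ).blk p = b ∧ p ∈ C t ∧ p ∉ C (t-1)), (inst β hβ).c b)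
        (fun t _ => Finset.sum_nonneg (fun b _ => le_of_lt ((inst β hβ).c_pos b))) hmem

end EB

/-- for every `β ≥ 1` there is a block-aware caching instance with
unit block costs and an initial cache for which the optimal eviction cost is at
least `β` times the optimal fetching cost, and the optimal fetching cost is
strictly positive. -/
theorem evict_ge_beta_mul_fetch (β : ℕ) (hβ : 1 ≤ β) :
    ∃ (I : BlockInstance) (C₀ : Finset (Fin I.n)),
      I.β = β ∧ (∀ b, I.c b = 1) ∧ C₀.card ≤ I.k ∧
      0 < sInf {r : ℝ | ∃ C, I.Schedule C₀ C ∧ I.fetchCost C = r} ∧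
      (β : ℝ) * sInf {r : ℝ | ∃ C, I.Schedule C₀ C ∧ I.fetchCost C = r} ≤
        sInf {r : ℝ | ∃ C, I.Schedule C₀ C ∧ I.evictCost C = r} := by
  classical
  refine ⟨EB.inst β hβ, EB.C0 β, rfl, fun _ => rfl, ?_, ?_, ?_⟩
  · rw [EB.card_C0]
  · have h1 : (1:ℝ) ∈ {r : ℝ | ∃ C, (EB.inst β hβ).Schedule (EB.C0 β) C ∧
        (EB.inst β hβ).fetchCost C = r} :=
      ⟨EB.Cgood β, EB.sched_good β hβ, EB.fetch_good β hβ⟩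
    have hlb : ∀ r ∈ {r : ℝ | ∃ C, (EB.inst β hβ).Schedule (EB.C0 β) C ∧
        (EB.inst β hβ).fetchCost C = r}, (1:ℝ) ≤ r := by
      rintro r ⟨C, hC, rfl⟩
      exact EB.fetch_lb β C hβ hC
    have := le_csInf ⟨1, h1⟩ hlb
    linarith
  · have h1 : (1:ℝ) ∈ {r : ℝ | ∃ C, (EB.inst β hβ).Schedule (EB.C0 β) C ∧
        (EB.inst β hβ).fetchCost C = r} :=
      ⟨EB.Cgood β, EB.sched_good β hβ, EB.fetch_good β hβ⟩
    have hlb : ∀ r ∈ {r : ℝ | ∃ C, (EB.inst β hβ).Schedule (EB.C0 β) C ∧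
        (EB.inst β hβ).fetchCost C = r}, (1:ℝ) ≤ r := by
      rintro r ⟨C, hC, rfl⟩
      exact EB.fetch_lb β C hβ hC
    have hFle : sInf {r : ℝ | ∃ C, (EB.inst β hβ).Schedule (EB.C0 β) C ∧
        (EB.inst β hβ).fetchCost C = r} ≤ 1 :=
      csInf_le ⟨1, hlb⟩ h1
    have hEne : ((EB.inst β hβ).evictCost (EB.Cgood β)) ∈
        {r : ℝ | ∃ C, (EB.inst β hβ).Schedule (EB.C0 β) C ∧
        (EB.inst β hβ).evictCost C = r} :=
      ⟨EB.Cgood β, EB.sched_good β hβ, rfl⟩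
    have hElb : ∀ r ∈ {r : ℝ | ∃ C, (EB.inst β hβ).Schedule (EB.C0 β) C ∧
        (EB.inst β hβ).evictCost C = r}, (β:ℝ) ≤ r := by
      rintro r ⟨C, hC, rfl⟩
      exact EB.evict_lb β C hβ hC
    have hE : (β:ℝ) ≤ sInf {r : ℝ | ∃ C, (EB.inst β hβ).Schedule (EB.C0 β) C ∧
        (EB.inst β hβ).evictCost C = r} :=
      le_csInf ⟨_, hEne⟩ hElb
    have hb0 : (0:ℝ) ≤ β := Nat.cast_nonneg β
    calc (β:ℝ) * sInf {r : ℝ | ∃ C, (EB.inst β hβ).Schedule (EB.C0 β) C ∧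
          (EB.inst β hβ).fetchCost C = r} ≤ (β:ℝ) * 1 := by
          exact mul_le_mul_of_nonneg_left hFle hb0
      _ = (β:ℝ) := mul_one _
      _ ≤ _ := hE
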